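/- (Lower bound on the growth rate at δ → 0⁺, from Appendix B) Let Ω be an LT output degree distribution with average degree Ω̄, r_i ∈ (0,1] and r_o ∈ (0,1). Then sup_{λ ∈ 𝒟_λ} [ r_i·H_b(λ) + log₂(1 − ρ_λ) ] ≥ r_i·H_b(1 − r_o) + Ω̄·log₂(r_o). -/

import Mathlib

open Finset Filter

/-- Binary entropy function (base-2 logarithms). -/
noncomputable def Hb (x : ℝ) : ℝ := -x * Real.logb 2 x - (1 - x) * Real.logb 2 (1 - x)

/-- `ρ_λ = (1/2)·Σ_{j=1}^{dmax} Ω_j·(1 − (1 − 2λ)^j)`. -/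
noncomputable def rho (dmax : ℕ) (Ω : ℕ → ℝ) (lam : ℝ) : ℝ :=
  (1 / 2) * ∑ j ∈ Finset.Icc 1 dmax, Ω j * (1 - (1 - 2 * lam) ^ j)

open scoped Classical in
/-- The domain `𝒟_λ`: `(0,1)` if `Ω_j = 0` for every even `j`, and `(0,1]` otherwise. -/
noncomputable def Dset (dmax : ℕ) (Ω : ℕ → ℝ) : Set ℝ :=
  if ∀ j ∈ Finset.Icc 1 dmax, Even j → Ω j = 0 then Set.Ioo 0 1 else Set.Ioc 0 1

/-- `f(δ,λ) = r_i·H_b(λ) + δ·log₂ ρ_λ + (1−δ)·log₂(1−ρ_λ)`. -/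
noncomputable def ff (dmax : ℕ) (Ω : ℕ → ℝ) (ri δ lam : ℝ) : ℝ :=
  ri * Hb lam + δ * Real.logb 2 (rho dmax Ω lam) + (1 - δ) * Real.logb 2 (1 - rho dmax Ω lam)

/-- `f_max(δ) = sup_{λ ∈ 𝒟_λ} f(δ,λ)`. -/
noncomputable def fmax (dmax : ℕ) (Ω : ℕ → ℝ) (ri δ : ℝ) : ℝ :=
  sSup (ff dmax Ω ri δ '' Dset dmax Ω)

/-- Growth rate `G(δ) = H_b(δ) − r_i·(1 − r_o) + f_max(δ)`. -/
noncomputable def Gr (dmax : ℕ) (Ω : ℕ → ℝ) (ri ro δ : ℝ) : ℝ :=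
  Hb δ - ri * (1 - ro) + fmax dmax Ω ri δ

/-- Normalized typical minimum distance `δ*`: `0` if `lim_{δ→0⁺} G(δ) ≥ 0`, and
`inf {δ > 0 : G(δ) > 0}` otherwise. -/
noncomputable def deltaStar (dmax : ℕ) (Ω : ℕ → ℝ) (ri ro : ℝ) : ℝ :=
  if 0 ≤ limUnder (nhdsWithin 0 (Set.Ioi 0)) (Gr dmax Ω ri ro) then 0
  else sInf {δ : ℝ | 0 < δ ∧ 0 < Gr dmax Ω ri ro δ}

lemma aux_pow {x : ℝ} (hx : -1 ≤ x) (hx1 : x ≤ 1) {j : ℕ} (hj : 1 ≤ j) :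
    ((1 + x) / 2) ^ j ≤ (1 + x ^ j) / 2 := by
  rcases le_or_gt 0 x with h0 | h0
  · have h := (convexOn_pow j).2 (Set.mem_Ici.2 h0) (Set.mem_Ici.2 (zero_le_one (α := ℝ)))
      (by norm_num : (0:ℝ) ≤ 1/2) (by norm_num : (0:ℝ) ≤ 1/2) (by norm_num)
    simp only [smul_eq_mul, one_pow, mul_one] at h
    calc ((1 + x) / 2) ^ j = (1/2 * x + 1/2 * 1) ^ j := by ring_nf
    _ ≤ 1/2 * x ^ j + 1/2 := by simpa using h
    _ = (1 + x ^ j) / 2 := by ring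
  · have habs : |x| ^ j ≤ |x| :=
      pow_le_of_le_one (abs_nonneg x) (abs_le.2 ⟨hx, hx1⟩) (by omega)
    have h1 : x ≤ x ^ j := by
      have h2 : -(|x| ^ j) ≤ x ^ j := by
        rw [← abs_pow]; exact neg_abs_le _
      have h3 : |x| = -x := abs_of_neg h0
      linarith
    calc ((1 + x) / 2) ^ j ≤ (1 + x) / 2 :=
          pow_le_of_le_one (by linarith) (by linarith) (by omega)
    _ ≤ (1 + x ^ j) / 2 := by linarith

lemma concave_logb2 : ConcaveOn ℝ (Set.Ioi 0) (fun x : ℝ => Real.logb 2 x) := by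
  have h := strictConcaveOn_log_Ioi.concaveOn.smul
    (c := (Real.log 2)⁻¹) (by positivity)
  convert h using 1
  · rfl
  · rfl
  · rfl
  funext x
  simp [Real.logb, div_eq_inv_mul, smul_eq_mul]


/-- Lower bound on the growth rate at `δ → 0⁺` (Appendix B):
`sup_{λ ∈ 𝒟_λ} [ r_i·H_b(λ) + log₂(1 − ρ_λ) ] ≥ r_i·H_b(1 − r_o) + Ω̄·log₂ r_o`. -/
theorem stmt_14 (dmax : ℕ) (Ω : ℕ → ℝ)
    (hΩpos : ∀ j ∈ Finset.Icc 1 dmax, 0 ≤ Ω j)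
    (hΩsum : ∑ j ∈ Finset.Icc 1 dmax, Ω j = 1)
    (ri ro : ℝ) (hri : ri ∈ Set.Ioc (0 : ℝ) 1) (hro : ro ∈ Set.Ioo (0 : ℝ) 1) :
    sSup ((fun lam => ri * Hb lam + Real.logb 2 (1 - rho dmax Ω lam)) '' Dset dmax Ω) ≥
      ri * Hb (1 - ro) + (∑ j ∈ Finset.Icc 1 dmax, (j : ℝ) * Ω j) * Real.logb 2 ro := by
  obtain ⟨hro0, hro1⟩ := hro
  obtain ⟨hri0, hri1⟩ := hri
  set x : ℝ := 2 * ro - 1 with hxdef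
  -- 1 - ρ at λ₀ = 1 - ro
  have hrho : 1 - rho dmax Ω (1 - ro) =
      ∑ j ∈ Finset.Icc 1 dmax, Ω j * ((1 + x ^ j) / 2) := by
    have hb : 1 - 2 * (1 - ro) = x := by rw [hxdef]; ring
    rw [rho, hb]
    calc 1 - 1/2 * ∑ j ∈ Finset.Icc 1 dmax, Ω j * (1 - x ^ j)
        = ∑ j ∈ Finset.Icc 1 dmax, Ω j
          - ∑ j ∈ Finset.Icc 1 dmax, 1/2 * (Ω j * (1 - x ^ j)) := by
          rw [hΩsum, Finset.mul_sum]
    _ = ∑ j ∈ Finset.Icc 1 dmax, (Ω j - 1/2 * (Ω j * (1 - x ^ j))) := by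
          rw [Finset.sum_sub_distrib]
    _ = ∑ j ∈ Finset.Icc 1 dmax, Ω j * ((1 + x ^ j) / 2) := by
          apply Finset.sum_congr rfl; intro j _; ring
  -- per-term bound
  have hterm : ∀ j ∈ Finset.Icc 1 dmax, Ω j * ro ^ j ≤ Ω j * ((1 + x ^ j) / 2) := by
    intro j hjmem
    have hj1 : 1 ≤ j := (Finset.mem_Icc.1 hjmem).1
    have := aux_pow (x := x) (by rw [hxdef]; linarith) (by rw [hxdef]; linarith) hj1
    have hro_eq : (1 + x) / 2 = ro := by rw [hxdef]; ring
    rw [hro_eq] at this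
    exact mul_le_mul_of_nonneg_left this (hΩpos j hjmem)
  set S : ℝ := ∑ j ∈ Finset.Icc 1 dmax, Ω j * ro ^ j with hSdef
  have hS_le : S ≤ 1 - rho dmax Ω (1 - ro) := by
    rw [hrho]; exact Finset.sum_le_sum hterm
  have hSpos : 0 < S := by
    obtain ⟨j, hjmem, hjpos⟩ := Finset.exists_lt_of_sum_lt
      (f := fun _ : ℕ => (0:ℝ)) (g := Ω) (s := Finset.Icc 1 dmax)
      (by rw [hΩsum]; simp)
    exact Finset.sum_pos' (fun i hi => mul_nonneg (hΩpos i hi) (by positivity))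
      ⟨j, hjmem, mul_pos hjpos (by positivity)⟩
  -- Jensen
  have hJ : (∑ j ∈ Finset.Icc 1 dmax, (j : ℝ) * Ω j) * Real.logb 2 ro
      ≤ Real.logb 2 S := by
    have h := concave_logb2.le_map_sum (w := Ω) (p := fun j => ro ^ j)
      hΩpos hΩsum (fun j _ => Set.mem_Ioi.2 (by positivity))
    simp only [smul_eq_mul, Real.logb_pow] at h
    calc (∑ j ∈ Finset.Icc 1 dmax, (j : ℝ) * Ω j) * Real.logb 2 ro
        = ∑ j ∈ Finset.Icc 1 dmax, Ω j * ((j : ℝ) * Real.logb 2 ro) := by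
          rw [Finset.sum_mul]; apply Finset.sum_congr rfl; intro j _; ring
    _ ≤ Real.logb 2 S := h
  have hlog : (∑ j ∈ Finset.Icc 1 dmax, (j : ℝ) * Ω j) * Real.logb 2 ro
      ≤ Real.logb 2 (1 - rho dmax Ω (1 - ro)) := by
    refine hJ.trans ?_
    exact Real.logb_le_logb_of_le (by norm_num) hSpos hS_le
  -- membership of 1 - ro in Dset
  have hmem : (1 - ro) ∈ Dset dmax Ω := by
    rw [Dset]
    split_ifs
    · exact ⟨by linarith, by linarith⟩
    · exact ⟨by linarith, by linarith⟩
  -- bounded above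
  have hHb : ∀ lam : ℝ, Hb lam ≤ 1 := by
    intro lam
    have heq : Hb lam = Real.binEntropy lam / Real.log 2 := by
      rw [Hb, Real.binEntropy, Real.logb, Real.logb, Real.log_inv, Real.log_inv]
      ring
    rw [heq, div_le_one (Real.log_pos (by norm_num))]
    exact Real.binEntropy_le_log_two
  have hbdd : BddAbove ((fun lam => ri * Hb lam + Real.logb 2 (1 - rho dmax Ω lam))
      '' Dset dmax Ω) := by
    refine ⟨ri, ?_⟩
    rintro y ⟨lam, hlam, rfl⟩
    show ri * Hb lam + Real.logb 2 (1 - rho dmax Ω lam) ≤ ri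
    have hlam' : 0 < lam ∧ lam ≤ 1 := by
      rw [Dset] at hlam
      split_ifs at hlam
      · exact ⟨hlam.1, hlam.2.le⟩
      · exact ⟨hlam.1, hlam.2⟩
    have hrho_nonneg : 0 ≤ rho dmax Ω lam := by
      rw [rho]
      apply mul_nonneg (by norm_num)
      apply Finset.sum_nonneg
      intro j hj
      apply mul_nonneg (hΩpos j hj)
      have h1 : (1 - 2 * lam) ^ j ≤ 1 := by
        calc (1 - 2 * lam) ^ j ≤ |(1 - 2 * lam) ^ j| := le_abs_self _
        _ = |1 - 2 * lam| ^ j := by rw [abs_pow]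
        _ ≤ 1 := pow_le_one₀ (abs_nonneg _) (abs_le.2 ⟨by linarith [hlam'.2], by linarith [hlam'.1]⟩)
      linarith
    have hrho_le_one : rho dmax Ω lam ≤ 1 := by
      have hsum_le : ∑ j ∈ Finset.Icc 1 dmax, Ω j * (1 - (1 - 2 * lam) ^ j)
          ≤ ∑ j ∈ Finset.Icc 1 dmax, Ω j * 2 := by
        apply Finset.sum_le_sum
        intro j hj
        have h2 : -1 ≤ (1 - 2 * lam) ^ j := by
          have h4 := neg_abs_le ((1 - 2 * lam) ^ j)
          have h3 : |(1 - 2 * lam) ^ j| ≤ 1 := by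
            rw [abs_pow]
            exact pow_le_one₀ (abs_nonneg _)
              (abs_le.2 ⟨by linarith [hlam'.2], by linarith [hlam'.1]⟩)
          linarith
        have := hΩpos j hj
        nlinarith
      have h5 : ∑ j ∈ Finset.Icc 1 dmax, Ω j * 2 = 2 := by
        rw [← Finset.sum_mul, hΩsum]; norm_num
      rw [rho]
      linarith
    have hlogb_nonpos : Real.logb 2 (1 - rho dmax Ω lam) ≤ 0 :=
      Real.logb_nonpos (by norm_num) (by linarith) (by linarith)
    have : ri * Hb lam ≤ ri := by
      calc ri * Hb lam ≤ ri * 1 := mul_le_mul_of_nonneg_left (hHb lam) hri0.le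
      _ = ri := mul_one ri
    linarith
  -- conclude
  have hle : ri * Hb (1 - ro) + (∑ j ∈ Finset.Icc 1 dmax, (j : ℝ) * Ω j) * Real.logb 2 ro
      ≤ ri * Hb (1 - ro) + Real.logb 2 (1 - rho dmax Ω (1 - ro)) := by linarith
  exact hle.trans (le_csSup hbdd ⟨1 - ro, hmem, rfl⟩)
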